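/- arXiv:0905.3197 — 2 statements merged into one kernel-verified Lean document; each statement's English description precedes it below -/
import Mathlib

section
/- The following two statements are equivalent: (1) for all finite simple graphs G and H, all positive integers s and t, and all vertices x ∈ V(G), y ∈ V(H), π_{st}(G × H, (x, y)) ≤ π_s(G, x) · π_t(H, y); (2) for all finite simple graphs G and H, all positive ODD integers s and t, and all vertices x ∈ V(G), y ∈ V(H), π_{st}(G × H, (x, y)) ≤ π_s(G, x) · π_t(H, y). -/
open scoped BigOperators

def PebMove {V : Type*} [DecidableEq V] (G : SimpleGraph V) (D D' : V → ℕ) : Prop :=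
  ∃ u v, G.Adj u v ∧ 2 ≤ D u ∧
    D' = fun w => if w = u then D u - 2 else if w = v then D v + 1 else D w

def Reaches {V : Type*} [DecidableEq V] (G : SimpleGraph V) (D D' : V → ℕ) : Prop :=
  ∃ D'', Relation.ReflTransGen (PebMove G) D D'' ∧ ∀ v, D' v ≤ D'' v

def pebTotal {V : Type*} [Fintype V] (D : V → ℕ) : ℕ := ∑ v, D v

noncomputable def pebSet {V : Type*} [Fintype V] [DecidableEq V] (G : SimpleGraph V)
    (S : Set (V → ℕ)) : ℕ∞ :=
  sInf {N : ℕ∞ | ∀ D₀ : V → ℕ, N ≤ (pebTotal D₀ : ℕ∞) → ∀ D ∈ S, Reaches G D₀ D}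

noncomputable def peb {V : Type*} [Fintype V] [DecidableEq V] (G : SimpleGraph V)
    (D : V → ℕ) : ℕ∞ :=
  pebSet G {D}

def unitDist {V : Type*} [DecidableEq V] (t : ℕ) (v : V) : V → ℕ :=
  fun w => if w = v then t else 0

section Basic
variable {V : Type*} [DecidableEq V] {G : SimpleGraph V} {D D' E E' F R : V → ℕ}

lemma reaches_of_le (h : ∀ v, D' v ≤ D v) : Reaches G D D' := ⟨D, .refl, h⟩

lemma reaches_rfl : Reaches G D D := reaches_of_le fun _ => le_rfl

lemma pebMove_add (h : PebMove G D D') (R : V → ℕ) :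
    PebMove G (fun v => D v + R v) (fun v => D' v + R v) := by
  obtain ⟨u, v, hadj, h2, rfl⟩ := h
  have hne : v ≠ u := (G.ne_of_adj hadj).symm
  refine ⟨u, v, hadj, by show 2 ≤ D u + R u; omega, ?_⟩
  funext w
  by_cases hu : w = u
  · subst hu; simp [hne.symm]; omega
  · by_cases hv : w = v <;> simp [hu, hv, hne] <;> omega

lemma rtg_add (h : Relation.ReflTransGen (PebMove G) D D') (R : V → ℕ) :
    Relation.ReflTransGen (PebMove G) (fun v => D v + R v) (fun v => D' v + R v) := by
  induction h with
  | refl => exact .refl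
  | tail _ hstep ih => exact ih.tail (pebMove_add hstep R)

lemma reaches_add (h1 : Reaches G D E) (h2 : Reaches G D' E') :
    Reaches G (fun v => D v + D' v) (fun v => E v + E' v) := by
  obtain ⟨F1, hc1, hle1⟩ := h1
  obtain ⟨F2, hc2, hle2⟩ := h2
  refine ⟨fun v => F1 v + F2 v, ?_, fun v => by have := hle1 v; have := hle2 v; simp only []; omega⟩
  have t1 := rtg_add hc1 D'
  have t2 := rtg_add hc2 F1
  simp only [show (fun v => D' v + F1 v) = (fun v => F1 v + D' v) from funext fun v => by omega,
    show (fun v => F2 v + F1 v) = (fun v => F1 v + F2 v) from funext fun v => by omega] at t2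
  exact t1.trans t2

lemma reaches_target_le (h : ∀ v, E' v ≤ E v) (hr : Reaches G D E) : Reaches G D E' := by
  obtain ⟨F, hc, hle⟩ := hr
  exact ⟨F, hc, fun v => (h v).trans (hle v)⟩

lemma reaches_trans (h1 : Reaches G D E) (h2 : Reaches G E F) : Reaches G D F := by
  obtain ⟨D'', hc1, hle1⟩ := h1
  obtain ⟨E'', hc2, hle2⟩ := h2
  have hR := rtg_add hc2 (fun v => D'' v - E v)
  have hD : D'' = fun v => E v + (D'' v - E v) := funext fun v => by have := hle1 v; omega
  refine ⟨fun v => E'' v + (D'' v - E v), ?_, fun v => (hle2 v).trans (by simp only []; omega)⟩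
  exact (hD ▸ hc1).trans hR

lemma reaches_unit_two {u v : V} (h : G.Adj u v) :
    Reaches G (unitDist 2 u) (unitDist 1 v) := by
  have hne : v ≠ u := (G.ne_of_adj h).symm
  refine ⟨_, Relation.ReflTransGen.single ⟨u, v, h, by simp [unitDist], rfl⟩, fun w => ?_⟩
  by_cases hw : w = v <;> simp [unitDist, hw, hne]

lemma reaches_unit_mul {u v : V} (h : G.Adj u v) (m : ℕ) :
    Reaches G (unitDist (2 * m) u) (unitDist m v) := by
  induction m with
  | zero => exact reaches_of_le (fun w => by simp [unitDist])
  | succ n ih =>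
    have h2 := reaches_add ih (reaches_unit_two h)
    have e1 : (fun w => unitDist (2 * n) u w + unitDist 2 u w) = unitDist (2 * (n + 1)) u :=
      funext fun w => by by_cases hw : w = u <;> simp [unitDist, hw] <;> omega
    have e2 : (fun w => unitDist n v w + unitDist 1 v w) = unitDist (n + 1) v :=
      funext fun w => by by_cases hw : w = v <;> simp [unitDist, hw]
    rw [e1, e2] at h2
    exact h2

lemma reaches_shift {P Q : V} (h : G.Adj P Q) (m : ℕ) (hD : 2 * m ≤ D P)
    (hle : ∀ z, D' z ≤ if z = P then D z - 2 * m else if z = Q then D z + m else D z) :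
    Reaches G D D' := by
  have hne : Q ≠ P := (G.ne_of_adj h).symm
  have hsplit : D = fun z => (if z = P then D z - 2 * m else D z) + unitDist (2 * m) P z :=
    funext fun z => by by_cases hz : z = P <;> simp [unitDist, hz] <;> omega
  have h1 := reaches_add (reaches_rfl (D := fun z => if z = P then D z - 2 * m else D z))
    (reaches_unit_mul (G := G) h m)
  rw [← hsplit] at h1
  refine reaches_target_le (fun z => ?_) h1
  refine (hle z).trans ?_
  by_cases hzP : z = P
  · subst hzP; simp [unitDist, hne]
  · by_cases hzQ : z = Q <;> simp [unitDist, hzP, hzQ, hne]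

end Basic

section PebAPI
variable {V : Type*} [Fintype V] [DecidableEq V] {G : SimpleGraph V} {T : V → ℕ} {N : ℕ∞}

def Solv (G : SimpleGraph V) (T : V → ℕ) (N : ℕ∞) : Prop :=
  ∀ D₀ : V → ℕ, N ≤ (pebTotal D₀ : ℕ∞) → Reaches G D₀ T

lemma peb_eq_sInf : peb G T = sInf {N : ℕ∞ | Solv G T N} := by
  unfold peb pebSet Solv
  congr 1
  ext N
  simp

lemma solv_top : Solv G T ⊤ := fun D₀ h => absurd h (by simp)

lemma peb_solv : Solv G T (peb G T) := by
  intro D₀ hle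
  rw [peb_eq_sInf] at hle
  have hlt : sInf {N : ℕ∞ | Solv G T N} < (pebTotal D₀ : ℕ∞) + 1 :=
    lt_of_le_of_lt hle (by exact_mod_cast lt_add_one _)
  obtain ⟨N, hN, hNlt⟩ := sInf_lt_iff.mp hlt
  exact hN D₀ ((ENat.lt_add_one_iff (by simp)).mp hNlt)

lemma peb_le_iff : peb G T ≤ N ↔ Solv G T N := by
  constructor
  · intro h D₀ hle
    exact peb_solv D₀ (h.trans hle)
  · intro h
    rw [peb_eq_sInf]
    exact sInf_le h

end PebAPI

section Spare
variable {V : Type*} [DecidableEq V] {G : SimpleGraph V}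

lemma spare_step {F F' C : V → ℕ} {w : V}
    (hinv : ∀ z, F z ≤ C z + unitDist 1 w z) (hm : PebMove G F F') :
    ∃ C' w', Relation.ReflTransGen (PebMove G) C C' ∧ ∀ z, F' z ≤ C' z + unitDist 1 w' z := by
  obtain ⟨u, v, hadj, h2, rfl⟩ := hm
  have hne : v ≠ u := (G.ne_of_adj hadj).symm
  by_cases hc : 2 ≤ C u
  · refine ⟨fun z => if z = u then C u - 2 else if z = v then C v + 1 else C z, w,
      Relation.ReflTransGen.single ⟨u, v, hadj, hc, rfl⟩, fun z => ?_⟩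
    have h1 := hinv z
    have hu := hinv u
    have hv := hinv v
    clear hinv
    simp only [unitDist] at *
    by_cases hz : z = u <;> by_cases hzv : z = v <;> by_cases hzw : z = w <;>
      simp_all <;> omega
  · have hwu : w = u := by
      by_contra hwu
      have := hinv u
      simp [unitDist, Ne.symm hwu] at this
      omega
    subst hwu
    refine ⟨C, v, Relation.ReflTransGen.refl, fun z => ?_⟩
    have h1 := hinv z
    have hu' := hinv w
    have hv' := hinv v
    clear hinv
    simp only [unitDist] at *
    by_cases hz : z = w <;> by_cases hzv : z = v <;> simp_all <;> omega

lemma spare_chain {F₀ F C : V → ℕ} {w : V}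
    (hchain : Relation.ReflTransGen (PebMove G) F₀ F)
    (hinv : ∀ z, F₀ z ≤ C z + unitDist 1 w z) :
    ∃ C' w', Relation.ReflTransGen (PebMove G) C C' ∧ ∀ z, F z ≤ C' z + unitDist 1 w' z := by
  induction hchain with
  | refl => exact ⟨C, w, .refl, hinv⟩
  | tail _ hstep ih =>
    obtain ⟨C1, w1, hc1, hinv1⟩ := ih
    obtain ⟨C2, w2, hc2, hinv2⟩ := spare_step hinv1 hstep
    exact ⟨C2, w2, hc1.trans hc2, hinv2⟩

lemma reaches_spare {D : V → ℕ} {v : V} {m : ℕ}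
    (h : Reaches G (fun z => D z + unitDist 1 v z) (unitDist (m + 1) v)) :
    Reaches G D (unitDist m v) := by
  obtain ⟨F, hchain, hle⟩ := h
  obtain ⟨C, w, hc, hinv⟩ := spare_chain hchain (fun z => le_rfl)
  refine ⟨C, hc, fun z => ?_⟩
  have h1 := hinv v
  have h2 := hle v
  clear hinv hle
  simp only [unitDist] at *
  by_cases hz : z = v <;> by_cases hvw : v = w <;> simp_all <;> omega

lemma zero_rtg {F : V → ℕ} (h : Relation.ReflTransGen (PebMove G) (fun _ => 0) F) :
    F = fun _ => 0 := by
  induction h with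
  | refl => rfl
  | tail _ hstep ih =>
    obtain ⟨u, v, _, h2, _⟩ := hstep
    rw [ih] at h2
    simp at h2

lemma zero_not_reaches {v : V} {m : ℕ} : ¬ Reaches G (fun _ => 0) (unitDist (m + 1) v) := by
  rintro ⟨F, hchain, hle⟩
  have := hle v
  rw [zero_rtg hchain] at this
  simp [unitDist] at this

end Spare

section Succ
variable {V : Type*} [Fintype V] [DecidableEq V] {G : SimpleGraph V}

lemma pebTotal_add (A B : V → ℕ) : pebTotal (fun z => A z + B z) = pebTotal A + pebTotal B := by
  simp [pebTotal, Finset.sum_add_distrib]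

lemma pebTotal_unit (t : ℕ) (v : V) : pebTotal (unitDist t v) = t := by
  simp [pebTotal, unitDist, Finset.sum_ite_eq']

lemma peb_unit_ne_zero {v : V} {m : ℕ} : peb G (unitDist (m + 1) v) ≠ 0 := by
  intro h0
  have := peb_solv (G := G) (T := unitDist (m + 1) v) (fun _ => 0) (by simp [h0, pebTotal])
  exact zero_not_reaches this

lemma peb_succ {v : V} (m : ℕ) :
    peb G (unitDist m v) + 1 ≤ peb G (unitDist (m + 1) v) := by
  rcases h : peb G (unitDist (m + 1) v) with _ | p
  · exact le_top
  · have hp : 1 ≤ p := by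
      rcases Nat.eq_zero_or_pos p with h0 | h1
      · exact absurd (by rw [h, h0]; rfl) (peb_unit_ne_zero (G := G) (v := v) (m := m))
      · exact h1
    have hle : peb G (unitDist m v) ≤ ((p - 1 : ℕ) : ℕ∞) := by
      rw [peb_le_iff]
      intro D₀ hN
      have htot : (p : ℕ∞) ≤ (pebTotal (fun z => D₀ z + unitDist 1 v z) : ℕ∞) := by
        rw [pebTotal_add, pebTotal_unit]
        have : (p - 1 : ℕ) ≤ pebTotal D₀ := by exact_mod_cast hN
        exact_mod_cast by omega
      have hsolv := peb_le_iff.mp (le_of_eq h)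
      exact reaches_spare (hsolv _ htot)
    have hstep : peb G (unitDist m v) + 1 ≤ ((p - 1 : ℕ) : ℕ∞) + 1 := add_le_add_left hle 1
    refine hstep.trans ?_
    have : ((p - 1 : ℕ) : ℕ∞) + 1 = ((p : ℕ) : ℕ∞) := by
      rw [show ((1:ℕ∞)) = ((1:ℕ):ℕ∞) from rfl, ← Nat.cast_add]
      congr 1
      omega
    rw [this]
    exact le_of_eq rfl

lemma peb_add {v : V} (m j : ℕ) :
    peb G (unitDist m v) + (j : ℕ∞) ≤ peb G (unitDist (m + j) v) := by
  induction j with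
  | zero => simp
  | succ n ih =>
    have h1 := peb_succ (G := G) (v := v) (m + n)
    calc peb G (unitDist m v) + ((n : ℕ∞) + 1)
        = (peb G (unitDist m v) + n) + 1 := by rw [add_assoc]
      _ ≤ peb G (unitDist (m + n) v) + 1 := add_le_add_left ih 1
      _ ≤ peb G (unitDist (m + n + 1) v) := h1
      _ = peb G (unitDist (m + (n + 1)) v) := by rw [add_assoc]

end Succ

section Pendant
variable {V : Type*} [DecidableEq V]

def pendant (G : SimpleGraph V) (x : V) : SimpleGraph (Option V) where
  Adj u v := match u, v with
    | some a, some b => G.Adj a b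
    | some a, none => a = x
    | none, some b => b = x
    | none, none => False
  symm := by
    refine ⟨?_⟩; rintro (_ | a) (_ | b) h
    · exact h
    · exact h
    · exact h
    · exact h.symm
  loopless := by
    refine ⟨?_⟩; rintro (_ | a) h
    · exact h
    · exact G.loopless.irrefl a h

lemma pendant_adj_some_none {G : SimpleGraph V} {x : V} : (pendant G x).Adj (some x) none := rfl

lemma pendant_adj_some_some {G : SimpleGraph V} {x : V} {a b : V} :
    (pendant G x).Adj (some a) (some b) ↔ G.Adj a b := Iff.rfl

def extOpt (D : V → ℕ) : Option V → ℕ := fun u => u.elim 0 D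

variable {G : SimpleGraph V} {x : V}

lemma pebMove_extOpt {D D' : V → ℕ} (h : PebMove G D D') :
    PebMove (pendant G x) (extOpt D) (extOpt D') := by
  obtain ⟨u, v, hadj, h2, rfl⟩ := h
  refine ⟨some u, some v, hadj, h2, ?_⟩
  funext w
  rcases w with _ | w
  · simp [extOpt]
  · show (if w = u then D u - 2 else if w = v then D v + 1 else D w) = _
    simp only [Option.some.injEq]
    by_cases hu : w = u <;> by_cases hv : w = v <;> simp [hu, hv, extOpt]

lemma reaches_extOpt {D E : V → ℕ} (h : Reaches G D E) :
    Reaches (pendant G x) (extOpt D) (extOpt E) := by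
  obtain ⟨F, hc, hle⟩ := h
  refine ⟨extOpt F, ?_, ?_⟩
  · clear hle
    induction hc with
    | refl => exact .refl
    | tail _ hstep ih => exact ih.tail (pebMove_extOpt hstep)
  · rintro (_ | w)
    · exact le_rfl
    · exact hle w

lemma extOpt_unit {t : ℕ} {v : V} : extOpt (unitDist t v) = unitDist t (some v) := by
  funext w
  rcases w with _ | w
  · simp [extOpt, unitDist]
  · simp [extOpt, unitDist]

lemma pebTotal_extOpt [Fintype V] (D : V → ℕ) : pebTotal (extOpt D) = pebTotal D := by
  simp [pebTotal, extOpt, Fintype.sum_option]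

lemma lemC [Fintype V] (k : ℕ) :
    peb (pendant G x) (unitDist k none) ≤ peb G (unitDist (2 * k) x) := by
  rw [peb_le_iff]
  intro Dh hN
  set w₀ := Dh none with hw₀
  by_cases hw : k ≤ w₀
  · refine reaches_of_le fun z => ?_
    rcases z with _ | z <;> simp [unitDist, hw₀] <;> omega
  · push_neg at hw
    set DG : V → ℕ := fun g => Dh (some g) with hDG
    have hsplit : Dh = fun u => extOpt DG u + unitDist w₀ none u := by
      funext u
      rcases u with _ | u <;> simp [extOpt, unitDist, hDG, hw₀]
    have htot : pebTotal Dh = pebTotal DG + w₀ := by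
      rw [hsplit, pebTotal_add, pebTotal_extOpt, pebTotal_unit]
    -- peb G (unit (2*(k-w₀)) x) + 2*w₀ ≤ peb G (unit (2*k) x)
    have hkey : peb G (unitDist (2 * (k - w₀)) x) + ((2 * w₀ : ℕ) : ℕ∞)
        ≤ peb G (unitDist (2 * k) x) := by
      have := peb_add (G := G) (v := x) (2 * (k - w₀)) (2 * w₀)
      rwa [show 2 * (k - w₀) + 2 * w₀ = 2 * k by omega] at this
    have hDGtot : peb G (unitDist (2 * (k - w₀)) x) ≤ (pebTotal DG : ℕ∞) := by
      have h1 : peb G (unitDist (2 * (k - w₀)) x) + ((2 * w₀ : ℕ) : ℕ∞)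
          ≤ (pebTotal DG : ℕ∞) + ((2 * w₀ : ℕ) : ℕ∞) := by
        refine (hkey.trans hN).trans ?_
        rw [htot]
        push_cast
        have : (w₀ : ℕ∞) ≤ ((2 * w₀ : ℕ) : ℕ∞) := by exact_mod_cast by omega
        push_cast at this
        exact add_le_add_right this _
      exact (WithTop.add_le_add_iff_right (by exact_mod_cast (ENat.coe_ne_top (2 * w₀)))).mp h1
    have hreach := peb_solv DG hDGtot
    have hlift := reaches_extOpt (x := x) hreach
    rw [extOpt_unit] at hlift
    have hmove := reaches_unit_mul (G := pendant G x) pendant_adj_some_none (k - w₀)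
    have hmain := reaches_trans hlift hmove
    have hfinal := reaches_add hmain
      (reaches_rfl (G := pendant G x) (D := unitDist w₀ (none : Option V)))
    rw [← hsplit] at hfinal
    refine reaches_target_le (fun z => ?_) hfinal
    rcases z with _ | z <;> simp [unitDist] <;> omega

end Pendant

section Projection
open SimpleGraph
variable {V W : Type*} [DecidableEq V] [DecidableEq W]
variable {G : SimpleGraph V} {H : SimpleGraph W} {x : V} {y : W}

def PhiG (x : V) (E : Option V × W → ℕ) : V × W → ℕ :=
  fun p => E (some p.1, p.2) + (if p.1 = x then 2 * E (none, p.2) else 0)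

lemma lem6G_step {E E' : Option V × W → ℕ}
    (hm : PebMove ((pendant G x) □ H) E E') :
    Reaches (G □ H) (PhiG x E) (PhiG x E') := by
  obtain ⟨u, v, hadj, h2, rfl⟩ := hm
  obtain ⟨u1, u2⟩ := u
  obtain ⟨v1, v2⟩ := v
  rw [SimpleGraph.boxProd_adj] at hadj
  rcases hadj with ⟨hadj1, hequ⟩ | ⟨hadjH, hequ⟩
  · simp only at hadj1 hequ
    subst hequ
    rcases u1 with _ | a <;> rcases v1 with _ | b
    · exact hadj1.elim
    · -- none → some b, with b = x : Phi decreases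
      have hbx : b = x := hadj1
      subst hbx
      refine reaches_of_le fun z => ?_
      obtain ⟨g, h⟩ := z
      simp only [PhiG, Prod.mk.injEq, Option.some.injEq] at *
      by_cases hgb : g = b <;> by_cases hh : h = u2 <;> simp_all <;> omega
    · -- some a → none, with a = x : Phi unchanged
      have hax : a = x := hadj1
      subst hax
      refine reaches_of_le fun z => ?_
      obtain ⟨g, h⟩ := z
      simp only [PhiG, Prod.mk.injEq, Option.some.injEq] at *
      by_cases hga : g = a <;> by_cases hh : h = u2 <;> simp_all <;> omega
    · -- G-edge
      have hGadj : G.Adj a b := hadj1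
      have hne := G.ne_of_adj hGadj
      refine reaches_shift (P := (a, u2)) (Q := (b, u2))
        (SimpleGraph.boxProd_adj.mpr (Or.inl ⟨hGadj, rfl⟩)) 1 ?_ (fun z => ?_)
      · simp only [PhiG] at h2 ⊢
        by_cases hax : a = x <;> simp_all <;> omega
      · obtain ⟨g, h⟩ := z
        simp only [PhiG, Prod.mk.injEq, Option.some.injEq] at *
        by_cases hga : g = a <;> by_cases hgb : g = b <;> by_cases hh : h = u2 <;>
          simp_all <;> omega
  · simp only at hadjH hequ
    subst hequ
    have hneH := H.ne_of_adj hadjH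
    rcases u1 with _ | g0
    · -- H-edge at level none : shift 2 at (x, u2) → (x, v2)
      refine reaches_shift (P := (x, u2)) (Q := (x, v2))
        (SimpleGraph.boxProd_adj.mpr (Or.inr ⟨hadjH, rfl⟩)) 2 ?_ (fun z => ?_)
      · simp only [PhiG] at h2 ⊢
        simp_all
        omega
      · obtain ⟨g, h⟩ := z
        simp only [PhiG, Prod.mk.injEq, Option.some.injEq] at *
        by_cases hgx : g = x <;> by_cases hh : h = u2 <;> by_cases hh2 : h = v2 <;>
          simp_all <;> omega
    · -- H-edge at level some g0 : shift 1 at (g0, u2) → (g0, v2)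
      refine reaches_shift (P := (g0, u2)) (Q := (g0, v2))
        (SimpleGraph.boxProd_adj.mpr (Or.inr ⟨hadjH, rfl⟩)) 1 ?_ (fun z => ?_)
      · simp only [PhiG] at h2 ⊢
        by_cases hgx : g0 = x <;> simp_all <;> omega
      · obtain ⟨g, h⟩ := z
        simp only [PhiG, Prod.mk.injEq, Option.some.injEq] at *
        by_cases hgg : g = g0 <;> by_cases hh : h = u2 <;> by_cases hh2 : h = v2 <;>
          by_cases hgx : g = x <;> simp_all <;> omega

lemma lem6G_chain {E E₂ : Option V × W → ℕ}
    (hc : Relation.ReflTransGen (PebMove ((pendant G x) □ H)) E E₂) :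
    Reaches (G □ H) (PhiG x E) (PhiG x E₂) := by
  induction hc with
  | refl => exact reaches_rfl
  | tail _ hstep ih => exact reaches_trans ih (lem6G_step hstep)

lemma lem6G [Fintype V] [Fintype W] (m : ℕ) :
    peb (G □ H) (unitDist (2 * m) (x, y))
      ≤ peb ((pendant G x) □ H) (unitDist m ((none : Option V), y)) := by
  rw [peb_le_iff]
  intro D₀ hN
  set Dh : Option V × W → ℕ := fun p => p.1.elim 0 (fun g => D₀ (g, p.2)) with hDh
  have htot : pebTotal Dh = pebTotal D₀ := by
    simp [pebTotal, hDh, Fintype.sum_prod_type, Fintype.sum_option]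
  have hreach := peb_solv Dh (by rw [htot]; exact hN)
  obtain ⟨F, hc, hle⟩ := hreach
  have hsim := lem6G_chain (G := G) hc
  have hid : PhiG x Dh = D₀ := by
    funext p
    obtain ⟨g, h⟩ := p
    simp [PhiG, hDh]
  rw [hid] at hsim
  refine reaches_trans hsim (reaches_of_le fun z => ?_)
  obtain ⟨g, h⟩ := z
  have hFn := hle ((none : Option V), y)
  simp only [unitDist, PhiG, Prod.mk.injEq] at *
  by_cases hgx : g = x <;> by_cases hhy : h = y <;> simp_all <;> omega

end Projection

section ProjectionH
open SimpleGraph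
variable {V W : Type*} [DecidableEq V] [DecidableEq W]
variable {G : SimpleGraph V} {H : SimpleGraph W} {x : V} {y : W}

def PhiH (y : W) (E : V × Option W → ℕ) : V × W → ℕ :=
  fun p => E (p.1, some p.2) + (if p.2 = y then 2 * E (p.1, none) else 0)

lemma lem6H_step {E E' : V × Option W → ℕ}
    (hm : PebMove (G □ (pendant H y)) E E') :
    Reaches (G □ H) (PhiH y E) (PhiH y E') := by
  obtain ⟨u, v, hadj, h2, rfl⟩ := hm
  obtain ⟨u1, u2⟩ := u
  obtain ⟨v1, v2⟩ := v
  rw [SimpleGraph.boxProd_adj] at hadj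
  rcases hadj with ⟨hadjG, hequ⟩ | ⟨hadj1, hequ⟩
  · simp only at hadjG hequ
    subst hequ
    have hneG := G.ne_of_adj hadjG
    rcases u2 with _ | h0
    · refine reaches_shift (P := (u1, y)) (Q := (v1, y))
        (SimpleGraph.boxProd_adj.mpr (Or.inl ⟨hadjG, rfl⟩)) 2 ?_ (fun z => ?_)
      · simp only [PhiH] at h2 ⊢
        simp_all
        omega
      · obtain ⟨g, h⟩ := z
        simp only [PhiH, Prod.mk.injEq, Option.some.injEq] at *
        by_cases hhy : h = y <;> by_cases hg : g = u1 <;> by_cases hg2 : g = v1 <;>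
          simp_all <;> omega
    · refine reaches_shift (P := (u1, h0)) (Q := (v1, h0))
        (SimpleGraph.boxProd_adj.mpr (Or.inl ⟨hadjG, rfl⟩)) 1 ?_ (fun z => ?_)
      · simp only [PhiH] at h2 ⊢
        by_cases hhy : h0 = y <;> simp_all <;> omega
      · obtain ⟨g, h⟩ := z
        simp only [PhiH, Prod.mk.injEq, Option.some.injEq] at *
        by_cases hhh : h = h0 <;> by_cases hg : g = u1 <;> by_cases hg2 : g = v1 <;>
          by_cases hhy : h = y <;> simp_all <;> omega
  · simp only at hadj1 hequ
    subst hequ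
    rcases u2 with _ | a <;> rcases v2 with _ | b
    · exact hadj1.elim
    · have hby : b = y := hadj1
      subst hby
      refine reaches_of_le fun z => ?_
      obtain ⟨g, h⟩ := z
      simp only [PhiH, Prod.mk.injEq, Option.some.injEq] at *
      by_cases hhb : h = b <;> by_cases hg : g = u1 <;> simp_all <;> omega
    · have hay : a = y := hadj1
      subst hay
      refine reaches_of_le fun z => ?_
      obtain ⟨g, h⟩ := z
      simp only [PhiH, Prod.mk.injEq, Option.some.injEq] at *
      by_cases hha : h = a <;> by_cases hg : g = u1 <;> simp_all <;> omega
    · have hHadj : H.Adj a b := hadj1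
      have hne := H.ne_of_adj hHadj
      refine reaches_shift (P := (u1, a)) (Q := (u1, b))
        (SimpleGraph.boxProd_adj.mpr (Or.inr ⟨hHadj, rfl⟩)) 1 ?_ (fun z => ?_)
      · simp only [PhiH] at h2 ⊢
        by_cases hay : a = y <;> simp_all <;> omega
      · obtain ⟨g, h⟩ := z
        simp only [PhiH, Prod.mk.injEq, Option.some.injEq] at *
        by_cases hha : h = a <;> by_cases hhb : h = b <;> by_cases hg : g = u1 <;>
          simp_all <;> omega

lemma lem6H_chain {E E₂ : V × Option W → ℕ}
    (hc : Relation.ReflTransGen (PebMove (G □ (pendant H y))) E E₂) :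
    Reaches (G □ H) (PhiH y E) (PhiH y E₂) := by
  induction hc with
  | refl => exact reaches_rfl
  | tail _ hstep ih => exact reaches_trans ih (lem6H_step hstep)

lemma lem6H [Fintype V] [Fintype W] (m : ℕ) :
    peb (G □ H) (unitDist (2 * m) (x, y))
      ≤ peb (G □ (pendant H y)) (unitDist m (x, (none : Option W))) := by
  rw [peb_le_iff]
  intro D₀ hN
  set Dh : V × Option W → ℕ := fun p => p.2.elim 0 (fun h => D₀ (p.1, h)) with hDh
  have htot : pebTotal Dh = pebTotal D₀ := by
    simp [pebTotal, hDh, Fintype.sum_prod_type, Fintype.sum_option]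
  have hreach := peb_solv Dh (by rw [htot]; exact hN)
  obtain ⟨F, hc, hle⟩ := hreach
  have hsim := lem6H_chain (H := H) hc
  have hid : PhiH y Dh = D₀ := by
    funext p
    obtain ⟨g, h⟩ := p
    simp [PhiH, hDh]
  rw [hid] at hsim
  refine reaches_trans hsim (reaches_of_le fun z => ?_)
  obtain ⟨g, h⟩ := z
  have hFn := hle (x, (none : Option W))
  simp only [unitDist, PhiH, Prod.mk.injEq] at *
  by_cases hgx : g = x <;> by_cases hhy : h = y <;> simp_all <;> omega

end ProjectionH

section Main
open SimpleGraph

lemma main_aux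
    (Hodd : ∀ (V W : Type) [Fintype V] [DecidableEq V] [Fintype W] [DecidableEq W]
        (G : SimpleGraph V) (H : SimpleGraph W) (s t : ℕ), 0 < s → 0 < t →
        Odd s → Odd t → ∀ (x : V) (y : W),
        peb (G □ H) (unitDist (s * t) (x, y))
          ≤ peb G (unitDist s x) * peb H (unitDist t y)) :
    ∀ (n : ℕ) (V W : Type) [Fintype V] [DecidableEq V] [Fintype W] [DecidableEq W]
        (G : SimpleGraph V) (H : SimpleGraph W) (s t : ℕ), s + t ≤ n → 0 < s → 0 < t →
        ∀ (x : V) (y : W),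
        peb (G □ H) (unitDist (s * t) (x, y))
          ≤ peb G (unitDist s x) * peb H (unitDist t y) := by
  intro n
  induction n using Nat.strong_induction_on with
  | _ n IH =>
    intro V W _ _ _ _ G H s t hn hs ht x y
    rcases Nat.even_or_odd s with hse | hso
    · obtain ⟨s₁, rfl⟩ := hse
      have hs₁ : 0 < s₁ := by omega
      have h6 := lem6G (G := G) (H := H) (x := x) (y := y) (s₁ * t)
      have hIH := IH (s₁ + t) (by omega) (Option V) W (pendant G x) H s₁ t le_rfl hs₁ ht
        (none : Option V) y
      have hC := lemC (G := G) (x := x) s₁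
      calc peb (G □ H) (unitDist ((s₁ + s₁) * t) (x, y))
          = peb (G □ H) (unitDist (2 * (s₁ * t)) (x, y)) := by rw [show (s₁+s₁)*t = 2*(s₁*t) by ring]
        _ ≤ peb ((pendant G x) □ H) (unitDist (s₁ * t) ((none : Option V), y)) := h6
        _ ≤ peb (pendant G x) (unitDist s₁ (none : Option V)) * peb H (unitDist t y) := hIH
        _ ≤ peb G (unitDist (2 * s₁) x) * peb H (unitDist t y) := mul_le_mul_left hC _
        _ = peb G (unitDist (s₁ + s₁) x) * peb H (unitDist t y) := by rw [show 2*s₁ = s₁+s₁ by ring]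
    · rcases Nat.even_or_odd t with hte | hto
      · obtain ⟨t₁, rfl⟩ := hte
        have ht₁ : 0 < t₁ := by omega
        have h6 := lem6H (G := G) (H := H) (x := x) (y := y) (s * t₁)
        have hIH := IH (s + t₁) (by omega) V (Option W) G (pendant H y) s t₁ le_rfl hs ht₁
          x (none : Option W)
        have hC := lemC (G := H) (x := y) t₁
        calc peb (G □ H) (unitDist (s * (t₁ + t₁)) (x, y))
            = peb (G □ H) (unitDist (2 * (s * t₁)) (x, y)) := by rw [show s*(t₁+t₁) = 2*(s*t₁) by ring]
          _ ≤ peb (G □ (pendant H y)) (unitDist (s * t₁) (x, (none : Option W))) := h6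
          _ ≤ peb G (unitDist s x) * peb (pendant H y) (unitDist t₁ (none : Option W)) := hIH
          _ ≤ peb G (unitDist s x) * peb H (unitDist (2 * t₁) y) := mul_le_mul_right hC _
          _ = peb G (unitDist s x) * peb H (unitDist (t₁ + t₁) y) := by rw [show 2*t₁ = t₁+t₁ by ring]
      · exact Hodd V W G H s t hs ht hso hto x y

end Main

open SimpleGraph in
/-- The Graham-type inequality for all positive `s, t` and all target vertices
is equivalent to the one restricted to odd `s, t`. -/
theorem st_iff_odd_st :
    (∀ (V W : Type) [Fintype V] [DecidableEq V] [Fintype W] [DecidableEq W]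
        (G : SimpleGraph V) (H : SimpleGraph W) (s t : ℕ), 0 < s → 0 < t →
        ∀ (x : V) (y : W),
        peb (G □ H) (unitDist (s * t) (x, y))
          ≤ peb G (unitDist s x) * peb H (unitDist t y)) ↔
    (∀ (V W : Type) [Fintype V] [DecidableEq V] [Fintype W] [DecidableEq W]
        (G : SimpleGraph V) (H : SimpleGraph W) (s t : ℕ), 0 < s → 0 < t →
        Odd s → Odd t → ∀ (x : V) (y : W),
        peb (G □ H) (unitDist (s * t) (x, y))
          ≤ peb G (unitDist s x) * peb H (unitDist t y)) := by
  constructor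
  · intro h V W _ _ _ _ G H s t hs ht _ _ x y
    exact h V W G H s t hs ht x y
  · intro Hodd V W _ _ _ _ G H s t hs ht x y
    exact main_aux Hodd (s + t) V W G H s t le_rfl hs ht x y
end

section
/- The following two statements about weighted graphs are equivalent: (1) for all weighted graphs G and H, all positive integers s and t, and all vertices x ∈ V(G), y ∈ V(H), π_{st}(G × H, (x, y)) ≤ π_s(G, x) · π_t(H, y); (2) for all weighted graphs G and H and all vertices x ∈ V(G), y ∈ V(H), π(G × H, (x, y)) ≤ π(G, x) · π(H, y). -/
open scoped BigOperators

/-- A weighted graph: a finite simple graph together with a symmetric weight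
function assigning a positive integer to each edge. -/
structure WeightedGraph (V : Type*) where
  toSimpleGraph : SimpleGraph V
  w : V → V → ℕ
  w_symm : ∀ u v, w u v = w v u
  w_pos : ∀ u v, toSimpleGraph.Adj u v → 0 < w u v

/-- A weighted pebbling move along the edge `(u, v)`: remove `w u v` pebbles
from `u` and add one pebble on the adjacent vertex `v`. -/
def WPebMove {V : Type*} [DecidableEq V] (G : WeightedGraph V) (D D' : V → ℕ) : Prop :=
  ∃ u v, G.toSimpleGraph.Adj u v ∧ G.w u v ≤ D u ∧
    D' = fun z => if z = u then D u - G.w u v else if z = v then D v + 1 else D z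

/-- `D'` is reachable from `D` in the weighted graph `G`: some sequence of
weighted pebbling moves starting at `D` produces a distribution containing `D'`. -/
def WReaches {V : Type*} [DecidableEq V] (G : WeightedGraph V) (D D' : V → ℕ) : Prop :=
  ∃ D'', Relation.ReflTransGen (WPebMove G) D D'' ∧ ∀ v, D' v ≤ D'' v

/-- The weighted pebbling number of a set `S` of target distributions. -/
noncomputable def wpebSet {V : Type*} [Fintype V] [DecidableEq V] (G : WeightedGraph V)
    (S : Set (V → ℕ)) : ℕ∞ :=
  sInf {N : ℕ∞ | ∀ D₀ : V → ℕ, N ≤ (pebTotal D₀ : ℕ∞) → ∀ D ∈ S, WReaches G D₀ D}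

/-- The weighted pebbling number of a single target distribution. -/
noncomputable def wpeb {V : Type*} [Fintype V] [DecidableEq V] (G : WeightedGraph V)
    (D : V → ℕ) : ℕ∞ :=
  wpebSet G {D}

open SimpleGraph in
/-- The Cartesian product of two weighted graphs. -/
def WeightedGraph.boxProd {V W : Type*} [DecidableEq V]
    (G : WeightedGraph V) (H : WeightedGraph W) : WeightedGraph (V × W) where
  toSimpleGraph := G.toSimpleGraph □ H.toSimpleGraph
  w := fun p q => if p.1 = q.1 then H.w p.2 q.2 else G.w p.1 q.1
  w_symm := by
    intro p q
    show (if p.1 = q.1 then H.w p.2 q.2 else G.w p.1 q.1)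
        = (if q.1 = p.1 then H.w q.2 p.2 else G.w q.1 p.1)
    by_cases h : p.1 = q.1
    · rw [if_pos h, if_pos h.symm, H.w_symm]
    · rw [if_neg h, if_neg (fun hh => h hh.symm), G.w_symm]
  w_pos := by
    intro p q hpq
    rcases (SimpleGraph.boxProd_adj).mp hpq with ⟨hadj, _⟩ | ⟨hadj, heq⟩
    · have hne : p.1 ≠ q.1 := hadj.ne
      simpa [hne] using G.w_pos _ _ hadj
    · simpa [heq] using H.w_pos _ _ hadj

section Machinery

variable {V : Type*} [DecidableEq V] {G : WeightedGraph V}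

lemma wpm_mono {D D' E : V → ℕ} (h : WPebMove G D D') (hE : ∀ v, D v ≤ E v) :
    ∃ E', WPebMove G E E' ∧ ∀ v, D' v ≤ E' v := by
  obtain ⟨u, v, hadj, hw, rfl⟩ := h
  refine ⟨_, ⟨u, v, hadj, le_trans hw (hE u), rfl⟩, ?_⟩
  intro z
  by_cases h1 : z = u
  · subst h1; simp only [if_pos rfl]; exact Nat.sub_le_sub_right (hE z) _
  · by_cases h2 : z = v
    · subst h2; simp only [if_neg h1, if_pos rfl]; exact Nat.add_le_add_right (hE z) 1
    · simp only [if_neg h1, if_neg h2]; exact hE z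

lemma rtg_mono {D D'' E : V → ℕ} (h : Relation.ReflTransGen (WPebMove G) D D'')
    (hE : ∀ v, D v ≤ E v) :
    ∃ E'', Relation.ReflTransGen (WPebMove G) E E'' ∧ ∀ v, D'' v ≤ E'' v := by
  induction h with
  | refl => exact ⟨E, .refl, hE⟩
  | tail _ hmv ih =>
    obtain ⟨E₁, hrtg, hle⟩ := ih
    obtain ⟨E₂, hmv₂, hle₂⟩ := wpm_mono hmv hle
    exact ⟨E₂, hrtg.tail hmv₂, hle₂⟩

lemma multi_move (G : WeightedGraph V) {u v : V} (hadj : G.toSimpleGraph.Adj u v) (n : ℕ)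
    (E : V → ℕ) (hn : n * G.w u v ≤ E u) :
    Relation.ReflTransGen (WPebMove G) E
      (fun z => if z = u then E u - n * G.w u v else if z = v then E v + n else E z) := by
  induction n generalizing E with
  | zero =>
    have h : (fun z => if z = u then E u - 0 * G.w u v else if z = v then E v + 0 else E z) = E := by
      funext z
      by_cases h1 : z = u
      · rw [if_pos h1, h1]; omega
      · rw [if_neg h1]
        by_cases h2 : z = v
        · rw [if_pos h2, h2]; omega
        · rw [if_neg h2]
    rw [h]
  | succ n ih =>
    have hne : u ≠ v := hadj.ne
    have hmul : (n + 1) * G.w u v = n * G.w u v + G.w u v := by ring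
    have hcle : G.w u v ≤ E u := by omega
    set E₁ : V → ℕ := fun z => if z = u then E u - G.w u v else if z = v then E v + 1 else E z
      with hE₁
    have hstep : WPebMove G E E₁ := ⟨u, v, hadj, hcle, rfl⟩
    have hE₁u : E₁ u = E u - G.w u v := by rw [hE₁]; simp
    have hE₁v : E₁ v = E v + 1 := by rw [hE₁]; simp [Ne.symm hne]
    have hn' : n * G.w u v ≤ E₁ u := by rw [hE₁u]; omega
    have htail := ih E₁ hn'
    have heq : (fun z => if z = u then E₁ u - n * G.w u v else if z = v then E₁ v + n else E₁ z)
        = (fun z => if z = u then E u - (n + 1) * G.w u v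
            else if z = v then E v + (n + 1) else E z) := by
      funext z
      by_cases h1 : z = u
      · rw [if_pos h1, if_pos h1, hE₁u]; omega
      · rw [if_neg h1, if_neg h1]
        by_cases h2 : z = v
        · rw [if_pos h2, if_pos h2, hE₁v]; omega
        · rw [if_neg h2, if_neg h2, hE₁]; simp [h1, h2]
    rw [heq] at htail
    exact (Relation.ReflTransGen.refl.tail hstep).trans htail

end Machinery

/-- `G` with an extra pendant vertex (`none`) attached to `x` with weight `s`. -/
def ext1 {V : Type*} (G : WeightedGraph V) (x : V) (s : ℕ) (hs : 0 < s) :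
    WeightedGraph (Option V) where
  toSimpleGraph :=
    { Adj := fun a b => match a, b with
        | some u, some v => G.toSimpleGraph.Adj u v
        | some u, none => u = x
        | none, some v => v = x
        | none, none => False
      symm := by
        constructor
        intro a b h
        match a, b with
        | some u, some v => exact G.toSimpleGraph.symm.symm _ _ h
        | some u, none => exact h
        | none, some v => exact h
        | none, none => exact h
      loopless := by
        constructor
        intro a h
        match a with
        | some u => exact G.toSimpleGraph.loopless.irrefl u h
        | none => exact h }
  w := fun a b => match a, b with
    | some u, some v => G.w u v
    | _, _ => s
  w_symm := by
    intro a b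
    match a, b with
    | some u, some v => exact G.w_symm u v
    | some u, none => rfl
    | none, some v => rfl
    | none, none => rfl
  w_pos := by
    intro a b h
    match a, b with
    | some u, some v => exact G.w_pos u v h
    | some u, none => exact hs
    | none, some v => exact hs
    | none, none => exact h.elim

lemma lift_rtg {V : Type*} [DecidableEq V] (G : WeightedGraph V) (x : V) (s : ℕ) (hs : 0 < s)
    {D D' : V → ℕ} (h : Relation.ReflTransGen (WPebMove G) D D') (c : ℕ) :
    Relation.ReflTransGen (WPebMove (ext1 G x s hs))
      (fun o => o.elim c D) (fun o => o.elim c D') := by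
  induction h with
  | refl => exact .refl
  | tail _ hmv ih =>
    obtain ⟨u, v, hadj, hw, rfl⟩ := hmv
    refine ih.tail ⟨some u, some v, hadj, hw, ?_⟩
    funext o
    match o with
    | none => simp [ext1]
    | some a =>
      by_cases h1 : a = u
      · subst h1; simp [ext1]
      · by_cases h2 : a = v
        · subst h2; simp [ext1, h1]
        · simp [ext1, h1, h2]
section ext1w
variable {V : Type*} [DecidableEq V] (G : WeightedGraph V) (x : V) (s : ℕ) (hs : 0 < s)

lemma ext1_w_some (u v : V) : (ext1 G x s hs).w (some u) (some v) = G.w u v := rfl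
lemma ext1_w_some_none (u : V) : (ext1 G x s hs).w (some u) none = s := rfl
lemma ext1_w_none_some (v : V) : (ext1 G x s hs).w none (some v) = s := rfl

end ext1w

lemma wpeb_ext_le {V : Type*} [Fintype V] [DecidableEq V] (G : WeightedGraph V) (x : V)
    (s : ℕ) (hs : 0 < s) :
    wpeb (ext1 G x s hs) (unitDist 1 (none : Option V)) ≤ wpeb G (unitDist s x) := by
  apply sInf_le_sInf
  intro N hN
  simp only [Set.mem_setOf_eq, Set.mem_singleton_iff] at hN ⊢
  intro D₀ htot D hD; subst hD
  by_cases h0 : 1 ≤ D₀ none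
  · refine ⟨D₀, .refl, ?_⟩
    intro v
    match v with
    | none => simpa [unitDist] using h0
    | some a => simp [unitDist]
  · have h0' : D₀ none = 0 := by omega
    set D₁ : V → ℕ := fun v => D₀ (some v) with hD₁
    have htot1 : pebTotal D₀ = pebTotal D₁ := by
      simp [pebTotal, Fintype.sum_option, h0', hD₁]
    obtain ⟨D'', hrtg, hcont⟩ := hN D₁ (by rw [htot1] at htot; exact htot) _ rfl
    have hx : s ≤ D'' x := by simpa [unitDist] using hcont x
    have hfun : D₀ = fun o => o.elim 0 D₁ := by
      funext o
      match o with
      | none => exact h0'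
      | some a => rfl
    have hlift := lift_rtg G x s hs hrtg 0
    rw [← hfun] at hlift
    refine ⟨_, hlift.tail ⟨some x, none, ?_, ?_, rfl⟩, ?_⟩
    · exact rfl
    · exact hx
    · intro v
      match v with
      | none => simp [unitDist]
      | some a => simp [unitDist]

/-- The core-distribution represented by a distribution on the doubly-extended product. -/
def rep {V W : Type*} [DecidableEq V] [DecidableEq W] (s t : ℕ) (x : V) (y : W)
    (D : Option V × Option W → ℕ) : V × W → ℕ :=
  fun p => D (some p.1, some p.2)
    + (if p.1 = x then s * D (none, some p.2) else 0)
    + (if p.2 = y then t * D (some p.1, none) else 0)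
    + (if p.1 = x ∧ p.2 = y then s * t * D (none, none) else 0)

lemma sim_step {V W : Type*} [DecidableEq V] [DecidableEq W]
    (G : WeightedGraph V) (H : WeightedGraph W) (x : V) (y : W) (s t : ℕ) (hs : 0 < s)
    (ht : 0 < t) {D D' : Option V × Option W → ℕ}
    (h : WPebMove ((ext1 G x s hs).boxProd (ext1 H y t ht)) D D')
    (E : V × W → ℕ) (hE : ∀ p, rep s t x y D p ≤ E p) :
    ∃ E', Relation.ReflTransGen (WPebMove (G.boxProd H)) E E' ∧
      ∀ p, rep s t x y D' p ≤ E' p := by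
  obtain ⟨⟨a, b⟩, ⟨c, d⟩, hadj, hw, rfl⟩ := h
  rcases SimpleGraph.boxProd_adj.mp hadj with ⟨hG, hbd⟩ | ⟨hH, hac⟩
  · -- move in the G-direction
    simp only at hbd
    subst hbd
    have hacne : a ≠ c := hG.ne
    have hwv : ((ext1 G x s hs).boxProd (ext1 H y t ht)).w (a, b) (c, b)
        = (ext1 G x s hs).w a c := if_neg hacne
    rw [hwv] at hw ⊢
    cases a with
    | some u₁ =>
      cases c with
      | some u₂ =>
        have hG' : G.toSimpleGraph.Adj u₁ u₂ := hG
        have hne : u₁ ≠ u₂ := hG'.ne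
        have hw' : G.w u₁ u₂ ≤ D (some u₁, b) := hw
        cases b with
        | some w₀ =>
          -- core move (u₁,w₀) → (u₂,w₀)
          have hadjc : (G.boxProd H).toSimpleGraph.Adj (u₁, w₀) (u₂, w₀) :=
            SimpleGraph.boxProd_adj.mpr (Or.inl ⟨hG', rfl⟩)
          have hwc : (G.boxProd H).w (u₁, w₀) (u₂, w₀) = G.w u₁ u₂ := if_neg hne
          have hle : (G.boxProd H).w (u₁, w₀) (u₂, w₀) ≤ E (u₁, w₀) := by
            have hEp := hE (u₁, w₀)
            simp [rep] at hEp
            rw [hwc]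
            omega
          refine ⟨_, .single ⟨_, _, hadjc, hle, rfl⟩, ?_⟩
          intro ⟨p1, p2⟩
          have hEp := hE (p1, p2)
          by_cases e1 : p1 = u₁ <;> by_cases e2 : p1 = u₂ <;> by_cases e3 : p2 = w₀ <;>
            first
              | exact absurd (e1.symm.trans e2) hne
              | (simp [rep, hwc, ext1_w_some, Prod.mk.injEq, hne, Ne.symm hne, e1, e2, e3] at hEp ⊢; omega)
        | none =>
          -- simulate by t moves (u₁,y) → (u₂,y)
          have hadjc : (G.boxProd H).toSimpleGraph.Adj (u₁, y) (u₂, y) :=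
            SimpleGraph.boxProd_adj.mpr (Or.inl ⟨hG', rfl⟩)
          have hwc : (G.boxProd H).w (u₁, y) (u₂, y) = G.w u₁ u₂ := if_neg hne
          have hmul : t * G.w u₁ u₂ ≤ t * D (some u₁, none) :=
            Nat.mul_le_mul (le_refl t) hw'
          have hle : t * (G.boxProd H).w (u₁, y) (u₂, y) ≤ E (u₁, y) := by
            have hEp := hE (u₁, y)
            simp [rep] at hEp
            rw [hwc]
            omega
          refine ⟨_, multi_move (G.boxProd H) hadjc t E hle, ?_⟩
          intro ⟨p1, p2⟩
          have hEp := hE (p1, p2)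
          by_cases e1 : p1 = u₁ <;> by_cases e2 : p1 = u₂ <;> by_cases e3 : p2 = y <;>
            first
              | exact absurd (e1.symm.trans e2) hne
              | (simp [rep, hwc, ext1_w_some, Prod.mk.injEq, Nat.mul_sub, Nat.mul_add,
                  Nat.mul_one, hne, Ne.symm hne, e1, e2, e3] at hEp ⊢; omega)
      | none =>
        -- (some x, b) → (none, b), weight s, no core move needed
        have hux : x = u₁ := Eq.symm hG
        subst hux
        have hw' : s ≤ D (some x, b) := hw
        refine ⟨E, .refl, ?_⟩
        cases b with
        | some w₀ =>
          intro ⟨p1, p2⟩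
          have hEp := hE (p1, p2)
          by_cases e1 : p1 = x <;> by_cases e3 : p2 = w₀ <;>
            (simp [rep, ext1_w_some_none, Prod.mk.injEq, Nat.mul_sub, Nat.mul_add,
              Nat.mul_one, e1, e3] at hEp ⊢; omega)
        | none =>
          have hts : t * s ≤ t * D (some x, none) := Nat.mul_le_mul (le_refl t) hw'
          have hcomm : t * s = s * t := Nat.mul_comm t s
          intro ⟨p1, p2⟩
          have hEp := hE (p1, p2)
          by_cases e1 : p1 = x <;> by_cases e3 : p2 = y <;>
            (simp [rep, ext1_w_some_none, Prod.mk.injEq, Nat.mul_sub, Nat.mul_add,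
              Nat.mul_one, e1, e3] at hEp ⊢; omega)
    | none =>
      cases c with
      | none => exact absurd hG (by simp [ext1])
      | some u₂ =>
        have hux : x = u₂ := Eq.symm hG
        subst hux
        have hw' : s ≤ D (none, b) := hw
        refine ⟨E, .refl, ?_⟩
        cases b with
        | some w₀ =>
          have hss : s * s ≤ s * D (none, some w₀) := Nat.mul_le_mul (le_refl s) hw'
          have h1s : 1 ≤ s * s := Nat.one_le_iff_ne_zero.mpr (by positivity)
          intro ⟨p1, p2⟩
          have hEp := hE (p1, p2)
          by_cases e1 : p1 = x <;> by_cases e3 : p2 = w₀ <;>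
            (simp [rep, ext1_w_none_some, Prod.mk.injEq, Nat.mul_sub, Nat.mul_add,
              Nat.mul_one, e1, e3] at hEp ⊢; omega)
        | none =>
          have hsts : s * t * s ≤ s * t * D (none, none) :=
            Nat.mul_le_mul (le_refl (s * t)) hw'
          have hts : t ≤ s * t * s := by
            calc t = 1 * t * 1 := by ring
              _ ≤ s * t * s := Nat.mul_le_mul (Nat.mul_le_mul hs (le_refl t)) hs
          intro ⟨p1, p2⟩
          have hEp := hE (p1, p2)
          by_cases e1 : p1 = x <;> by_cases e3 : p2 = y <;>
            (simp [rep, ext1_w_none_some, Prod.mk.injEq, Nat.mul_sub, Nat.mul_add,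
              Nat.mul_one, e1, e3] at hEp ⊢; omega)
  · -- move in the H-direction
    simp only at hac
    subst hac
    have hbdne : b ≠ d := hH.ne
    have hwv : ((ext1 G x s hs).boxProd (ext1 H y t ht)).w (a, b) (a, d)
        = (ext1 H y t ht).w b d := if_pos rfl
    rw [hwv] at hw ⊢
    cases b with
    | some w₁ =>
      cases d with
      | some w₂ =>
        have hH' : H.toSimpleGraph.Adj w₁ w₂ := hH
        have hne : w₁ ≠ w₂ := hH'.ne
        have hw' : H.w w₁ w₂ ≤ D (a, some w₁) := hw
        cases a with
        | some u₀ =>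
          have hadjc : (G.boxProd H).toSimpleGraph.Adj (u₀, w₁) (u₀, w₂) :=
            SimpleGraph.boxProd_adj.mpr (Or.inr ⟨hH', rfl⟩)
          have hwc : (G.boxProd H).w (u₀, w₁) (u₀, w₂) = H.w w₁ w₂ := if_pos rfl
          have hle : (G.boxProd H).w (u₀, w₁) (u₀, w₂) ≤ E (u₀, w₁) := by
            have hEp := hE (u₀, w₁)
            simp [rep] at hEp
            rw [hwc]
            omega
          refine ⟨_, .single ⟨_, _, hadjc, hle, rfl⟩, ?_⟩
          intro ⟨p1, p2⟩
          have hEp := hE (p1, p2)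
          by_cases e1 : p2 = w₁ <;> by_cases e2 : p2 = w₂ <;> by_cases e3 : p1 = u₀ <;>
            first
              | exact absurd (e1.symm.trans e2) hne
              | (simp [rep, hwc, ext1_w_some, Prod.mk.injEq, hne, Ne.symm hne, e1, e2, e3] at hEp ⊢; omega)
        | none =>
          -- simulate by s moves (x,w₁) → (x,w₂)
          have hadjc : (G.boxProd H).toSimpleGraph.Adj (x, w₁) (x, w₂) :=
            SimpleGraph.boxProd_adj.mpr (Or.inr ⟨hH', rfl⟩)
          have hwc : (G.boxProd H).w (x, w₁) (x, w₂) = H.w w₁ w₂ := if_pos rfl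
          have hmul : s * H.w w₁ w₂ ≤ s * D (none, some w₁) :=
            Nat.mul_le_mul (le_refl s) hw'
          have hle : s * (G.boxProd H).w (x, w₁) (x, w₂) ≤ E (x, w₁) := by
            have hEp := hE (x, w₁)
            simp [rep] at hEp
            rw [hwc]
            omega
          refine ⟨_, multi_move (G.boxProd H) hadjc s E hle, ?_⟩
          intro ⟨p1, p2⟩
          have hEp := hE (p1, p2)
          by_cases e1 : p2 = w₁ <;> by_cases e2 : p2 = w₂ <;> by_cases e3 : p1 = x <;>
            first
              | exact absurd (e1.symm.trans e2) hne
              | (simp [rep, hwc, ext1_w_some, Prod.mk.injEq, Nat.mul_sub, Nat.mul_add,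
                  Nat.mul_one, hne, Ne.symm hne, e1, e2, e3] at hEp ⊢; omega)
      | none =>
        have hwy : y = w₁ := Eq.symm hH
        subst hwy
        have hw' : t ≤ D (a, some y) := hw
        refine ⟨E, .refl, ?_⟩
        cases a with
        | some u₀ =>
          intro ⟨p1, p2⟩
          have hEp := hE (p1, p2)
          by_cases e1 : p2 = y <;> by_cases e3 : p1 = u₀ <;>
            (simp [rep, ext1_w_some_none, Prod.mk.injEq, Nat.mul_sub, Nat.mul_add,
              Nat.mul_one, e1, e3] at hEp ⊢; omega)
        | none =>
          have hst : s * t ≤ s * D (none, some y) := Nat.mul_le_mul (le_refl s) hw'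
          intro ⟨p1, p2⟩
          have hEp := hE (p1, p2)
          by_cases e1 : p2 = y <;> by_cases e3 : p1 = x <;>
            (simp [rep, ext1_w_some_none, Prod.mk.injEq, Nat.mul_sub, Nat.mul_add,
              Nat.mul_one, e1, e3] at hEp ⊢; omega)
    | none =>
      cases d with
      | none => exact absurd hH (by simp [ext1])
      | some w₂ =>
        have hwy : y = w₂ := Eq.symm hH
        subst hwy
        have hw' : t ≤ D (a, none) := hw
        refine ⟨E, .refl, ?_⟩
        cases a with
        | some u₀ =>
          have htt : t * t ≤ t * D (some u₀, none) := Nat.mul_le_mul (le_refl t) hw'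
          have h1t : 1 ≤ t * t := Nat.one_le_iff_ne_zero.mpr (by positivity)
          intro ⟨p1, p2⟩
          have hEp := hE (p1, p2)
          by_cases e1 : p2 = y <;> by_cases e3 : p1 = u₀ <;>
            (simp [rep, ext1_w_none_some, Prod.mk.injEq, Nat.mul_sub, Nat.mul_add,
              Nat.mul_one, e1, e3] at hEp ⊢; omega)
        | none =>
          have hstt : s * t * t ≤ s * t * D (none, none) :=
            Nat.mul_le_mul (le_refl (s * t)) hw'
          have hts : s ≤ s * t * t := by
            calc s = 1 * s * 1 := by ring
              _ ≤ t * s * t := Nat.mul_le_mul (Nat.mul_le_mul ht (le_refl s)) ht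
              _ = s * t * t := by ring
          intro ⟨p1, p2⟩
          have hEp := hE (p1, p2)
          by_cases e1 : p2 = y <;> by_cases e3 : p1 = x <;>
            (simp [rep, ext1_w_none_some, Prod.mk.injEq, Nat.mul_sub, Nat.mul_add,
              Nat.mul_one, e1, e3] at hEp ⊢; omega)

lemma sim_rtg {V W : Type*} [DecidableEq V] [DecidableEq W]
    (G : WeightedGraph V) (H : WeightedGraph W) (x : V) (y : W) (s t : ℕ) (hs : 0 < s)
    (ht : 0 < t) {D D' : Option V × Option W → ℕ}
    (h : Relation.ReflTransGen (WPebMove ((ext1 G x s hs).boxProd (ext1 H y t ht))) D D')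
    (E : V × W → ℕ) (hE : ∀ p, rep s t x y D p ≤ E p) :
    ∃ E', Relation.ReflTransGen (WPebMove (G.boxProd H)) E E' ∧
      ∀ p, rep s t x y D' p ≤ E' p := by
  induction h with
  | refl => exact ⟨E, .refl, hE⟩
  | tail _ hmv ih =>
    obtain ⟨E₁, hrtg, hle⟩ := ih
    obtain ⟨E₂, hrtg₂, hle₂⟩ := sim_step G H x y s t hs ht hmv E₁ hle
    exact ⟨E₂, hrtg.trans hrtg₂, hle₂⟩

lemma wpeb_prod_le {V W : Type*} [Fintype V] [DecidableEq V] [Fintype W] [DecidableEq W]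
    (G : WeightedGraph V) (H : WeightedGraph W) (x : V) (y : W) (s t : ℕ) (hs : 0 < s)
    (ht : 0 < t) :
    wpeb (G.boxProd H) (unitDist (s * t) (x, y))
      ≤ wpeb ((ext1 G x s hs).boxProd (ext1 H y t ht))
          (unitDist 1 ((none, none) : Option V × Option W)) := by
  apply sInf_le_sInf
  intro N hN
  simp only [Set.mem_setOf_eq, Set.mem_singleton_iff] at hN ⊢
  intro D₀ htot D hD; subst hD
  set Dbig : Option V × Option W → ℕ := fun p =>
    match p with
    | (some v, some w) => D₀ (v, w)
    | _ => 0 with hDbig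
  have htotbig : pebTotal Dbig = pebTotal D₀ := by
    simp [pebTotal, Fintype.sum_prod_type, Fintype.sum_option, hDbig]
  obtain ⟨Dend, hrtg, hcont⟩ := hN Dbig (by rw [htotbig]; exact htot) _ rfl
  have hcend : 1 ≤ Dend (none, none) := by simpa [unitDist] using hcont (none, none)
  have hrep0 : ∀ p, rep s t x y Dbig p ≤ D₀ p := by
    intro ⟨p1, p2⟩
    simp [rep, hDbig]
  obtain ⟨E', hrtg', hle'⟩ := sim_rtg G H x y s t hs ht hrtg D₀ hrep0
  refine ⟨E', hrtg', ?_⟩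
  intro ⟨p1, p2⟩
  have := hle' (p1, p2)
  simp only [rep] at this
  by_cases e1 : p1 = x <;> by_cases e2 : p2 = y <;>
    simp_all [unitDist, Prod.mk.injEq]
  · have hge : s * t ≤ s * t * Dend (none, none) := by
      calc s * t = s * t * 1 := by ring
        _ ≤ s * t * Dend (none, none) := Nat.mul_le_mul (le_refl (s * t)) hcend
    omega
/-- For weighted graphs, the Graham-type inequality for all positive `s, t` and
all target vertices is equivalent to the case `s = t = 1`. -/
theorem weighted_st_iff_weighted_one :
    (∀ (V W : Type) [Fintype V] [DecidableEq V] [Fintype W] [DecidableEq W]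
        (G : WeightedGraph V) (H : WeightedGraph W) (s t : ℕ), 0 < s → 0 < t →
        ∀ (x : V) (y : W),
        wpeb (G.boxProd H) (unitDist (s * t) (x, y))
          ≤ wpeb G (unitDist s x) * wpeb H (unitDist t y)) ↔
    (∀ (V W : Type) [Fintype V] [DecidableEq V] [Fintype W] [DecidableEq W]
        (G : WeightedGraph V) (H : WeightedGraph W) (x : V) (y : W),
        wpeb (G.boxProd H) (unitDist 1 (x, y))
          ≤ wpeb G (unitDist 1 x) * wpeb H (unitDist 1 y)) := by

  constructor
  · intro h V W _ _ _ _ G H x y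
    simpa using h V W G H 1 1 one_pos one_pos x y
  · intro h V W _ _ _ _ G H s t hs ht x y
    calc wpeb (G.boxProd H) (unitDist (s * t) (x, y))
        ≤ wpeb ((ext1 G x s hs).boxProd (ext1 H y t ht))
            (unitDist 1 ((none, none) : Option V × Option W)) :=
          wpeb_prod_le G H x y s t hs ht
      _ ≤ wpeb (ext1 G x s hs) (unitDist 1 (none : Option V))
            * wpeb (ext1 H y t ht) (unitDist 1 (none : Option W)) :=
          h (Option V) (Option W) (ext1 G x s hs) (ext1 H y t ht) none none
      _ ≤ wpeb G (unitDist s x) * wpeb H (unitDist t y) :=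
          mul_le_mul' (wpeb_ext_le G x s hs) (wpeb_ext_le H y t ht)
end
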